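/- Assume r ≥ 2. The element r_{r-1} r_r r_{r-1} of W commutes with s_r; moreover, if r ≥ 3 then for every integer a with 2 ≤ a ≤ r-1 one has (r_a r_{a-1}) s_a (r_a r_{a-1})^{-1} = s_{a-1} in W. -/

import Mathlib

noncomputable section

open CoxeterSystem

/-- The Coxeter matrix of the affine Weyl group of type `Ã_{2r}`:
vertices `0, …, 2r` arranged in a cycle mod `N = 2r+1`; `m i j = 3` if
`i - j ≡ ±1 (mod N)`, `m i j = 2` for other off-diagonal pairs. -/
def affACoxeterMatrix (r : ℕ) : CoxeterMatrix (Fin (2 * r + 1)) where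
  M i j := if i = j then 1 else if i = j + 1 ∨ j = i + 1 then 3 else 2
  isSymm := by
    apply Matrix.IsSymm.ext
    intro i j
    by_cases h : j = i
    · subst h; rfl
    · rw [if_neg h, if_neg (fun hh : i = j => h hh.symm)]
      exact if_congr or_comm rfl rfl
  diagonal i := if_pos rfl
  off_diagonal i j h := by
    try dsimp only
    rw [if_neg h]
    split <;> omega

/-- The affine Weyl group `W` of type `Ã_{2r}`, as the Coxeter group of the above matrix. -/
abbrev AffW (r : ℕ) : Type := (affACoxeterMatrix r).Group

/-- The canonical Coxeter system on `AffW r`. -/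
def affCS (r : ℕ) : CoxeterSystem (affACoxeterMatrix r) (AffW r) :=
  (affACoxeterMatrix r).toCoxeterSystem

open Fin.NatCast in
/-- The simple reflection `s i` (index taken mod `2r+1`). -/
def sgen (r i : ℕ) : AffW r := (affCS r).simple ((i : ℕ) : Fin (2 * r + 1))

open Fin.NatCast in
/-- The word in the simple reflections representing the generator `r_i` of the
relative Weyl group: `r_0 = s_0`, `r_i = s_i s_{2r+1-i}` for `1 ≤ i ≤ r-1`,
`r_r = s_r s_{r+1} s_r`. -/
def rword (r : ℕ) : ℕ → List (Fin (2 * r + 1)) := fun i =>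
  if i = 0 then [(0 : Fin (2 * r + 1))]
  else if i < r then [((i : ℕ) : Fin (2 * r + 1)), ((2 * r + 1 - i : ℕ) : Fin (2 * r + 1))]
  else [((r : ℕ) : Fin (2 * r + 1)), ((r + 1 : ℕ) : Fin (2 * r + 1)), ((r : ℕ) : Fin (2 * r + 1))]

/-- The element `r_i` of `W`. -/
def rgen (r i : ℕ) : AffW r := (affCS r).wordProd (rword r i)

/-- The list `[a, a+1, …, b]` (empty if `b < a`). -/
def ascSeq (a b : ℕ) : List ℕ := List.range' a (b + 1 - a)

/-- The list `[b, b-1, …, a]` (empty if `b < a`). -/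
def descSeq (a b : ℕ) : List ℕ := (List.range' a (b + 1 - a)).reverse

/-- The expansion, as a word in the simple reflections, of the block
`r_0 r_1 ⋯ r_{r-1} r_r r_{r-1} ⋯ r_k`. -/
def blockWord (r k : ℕ) : List (Fin (2 * r + 1)) :=
  ((ascSeq 0 r ++ descSeq k (r - 1)).map (rword r)).flatten

/-- The element `r_0 r_1 ⋯ r_{r-1} r_r r_{r-1} ⋯ r_k` of `W`. -/
def blockEl (r k : ℕ) : AffW r := (affCS r).wordProd (blockWord r k)

/-- The expansion, as a word in the simple reflections, of
`ϖ_k = (r_0 r_1 ⋯ r_{r-1} r_r r_{r-1} ⋯ r_k)^k`. -/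
def piWord (r k : ℕ) : List (Fin (2 * r + 1)) :=
  (List.replicate k (blockWord r k)).flatten

/-- The element `ϖ_k = (r_0 r_1 ⋯ r_{r-1} r_r r_{r-1} ⋯ r_k)^k` of `W`. -/
def piEl (r k : ℕ) : AffW r := (affCS r).wordProd (piWord r k)

/-- The expansion of the full block `r_0 r_1 ⋯ r_{r-1} r_r` as a word. -/
def fullBlockWord (r : ℕ) : List (Fin (2 * r + 1)) :=
  ((ascSeq 0 r).map (rword r)).flatten

/-- The element `r_0 r_1 ⋯ r_{r-1} r_r` of `W`. -/
def fullBlockEl (r : ℕ) : AffW r := (affCS r).wordProd (fullBlockWord r)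

open Fin.NatCast

lemma natCast_fin_eq_iff (r x y : ℕ) :
    ((x : ℕ) : Fin (2 * r + 1)) = ((y : ℕ) : Fin (2 * r + 1)) ↔
      x % (2 * r + 1) = y % (2 * r + 1) := by
  rw [Fin.ext_iff, Fin.val_natCast, Fin.val_natCast]

lemma natCast_fin_add_one (r y : ℕ) :
    ((y : ℕ) : Fin (2 * r + 1)) + 1 = (((y + 1 : ℕ)) : Fin (2 * r + 1)) := by
  push_cast
  ring

lemma M_eq_two (r x y : ℕ)
    (h1 : x % (2 * r + 1) ≠ y % (2 * r + 1))
    (h2 : x % (2 * r + 1) ≠ (y + 1) % (2 * r + 1))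
    (h3 : y % (2 * r + 1) ≠ (x + 1) % (2 * r + 1)) :
    (affACoxeterMatrix r).M ((x : ℕ) : Fin (2 * r + 1)) ((y : ℕ) : Fin (2 * r + 1)) = 2 := by
  show (if _ then _ else _) = 2
  rw [if_neg, if_neg]
  · rw [natCast_fin_add_one, natCast_fin_add_one, natCast_fin_eq_iff, natCast_fin_eq_iff]
    tauto
  · rw [natCast_fin_eq_iff]; exact h1

lemma M_eq_three (r x y : ℕ)
    (h1 : x % (2 * r + 1) ≠ y % (2 * r + 1))
    (h2 : x % (2 * r + 1) = (y + 1) % (2 * r + 1) ∨ y % (2 * r + 1) = (x + 1) % (2 * r + 1)) :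
    (affACoxeterMatrix r).M ((x : ℕ) : Fin (2 * r + 1)) ((y : ℕ) : Fin (2 * r + 1)) = 3 := by
  show (if _ then _ else _) = 3
  rw [if_neg, if_pos]
  · rw [natCast_fin_add_one, natCast_fin_add_one, natCast_fin_eq_iff, natCast_fin_eq_iff]
    exact h2
  · rw [natCast_fin_eq_iff]; exact h1

lemma sgen_inv (r x : ℕ) : (sgen r x)⁻¹ = sgen r x :=
  (affCS r).inv_simple _

lemma sgen_mul_self (r x : ℕ) : sgen r x * sgen r x = 1 :=
  (affCS r).simple_mul_simple_self _

lemma sgen_cancel_left (r x : ℕ) (w : AffW r) : sgen r x * (sgen r x * w) = w :=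
  (affCS r).simple_mul_simple_cancel_left _

lemma sgen_comm (r x y : ℕ)
    (h1 : x % (2 * r + 1) ≠ y % (2 * r + 1))
    (h2 : x % (2 * r + 1) ≠ (y + 1) % (2 * r + 1))
    (h3 : y % (2 * r + 1) ≠ (x + 1) % (2 * r + 1)) :
    sgen r x * sgen r y = sgen r y * sgen r x := by
  have h := (affCS r).simple_mul_simple_pow ((x : ℕ) : Fin (2 * r + 1)) ((y : ℕ) : Fin (2 * r + 1))
  rw [M_eq_two r x y h1 h2 h3] at h
  have h' : (sgen r x * sgen r y) * (sgen r x * sgen r y) = 1 := by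
    rw [← sq]; exact h
  have : sgen r x * sgen r y = (sgen r x * sgen r y)⁻¹ := by
    exact eq_inv_of_mul_eq_one_right h'
  rw [this, mul_inv_rev, sgen_inv, sgen_inv]

lemma sgen_braid (r x y : ℕ)
    (h1 : x % (2 * r + 1) ≠ y % (2 * r + 1))
    (h2 : x % (2 * r + 1) = (y + 1) % (2 * r + 1) ∨ y % (2 * r + 1) = (x + 1) % (2 * r + 1)) :
    sgen r x * sgen r y * sgen r x = sgen r y * sgen r x * sgen r y := by
  have h : (sgen r x * sgen r y) ^ 3 = 1 := by
    have h0 := (affCS r).simple_mul_simple_pow ((x : ℕ) : Fin (2 * r + 1))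
      ((y : ℕ) : Fin (2 * r + 1))
    rwa [M_eq_three r x y h1 h2] at h0
  rw [pow_succ, pow_succ, pow_one] at h
  have h' : (sgen r x * sgen r y * sgen r x) * (sgen r y * sgen r x * sgen r y) = 1 := by
    rw [← h]; group
  have hsq2 : (sgen r y * sgen r x * sgen r y) * (sgen r y * sgen r x * sgen r y) = 1 := by
    simp only [mul_assoc]
    rw [sgen_cancel_left, sgen_cancel_left, sgen_mul_self]
  calc sgen r x * sgen r y * sgen r x
      = sgen r x * sgen r y * sgen r x * ((sgen r y * sgen r x * sgen r y) * (sgen r y * sgen r x * sgen r y)) := by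
        rw [hsq2, mul_one]
    _ = (sgen r x * sgen r y * sgen r x * (sgen r y * sgen r x * sgen r y)) * (sgen r y * sgen r x * sgen r y) := by
        group
    _ = sgen r y * sgen r x * sgen r y := by rw [h', one_mul]

section AbstractLemmas

variable {G : Type*} [Group G]

/-- Abstract form of statement 1: with `a,b,c,d` satisfying `aba = bab`,
`ac = ca`, `ad = da`, `bd = db`, the element `adbcbad` commutes with `b`. -/
lemma abstract_lem1 (a b c d : G)
    (hab : a * b * a = b * a * b)
    (hac : a * c = c * a)
    (had : a * d = d * a)
    (hbd : b * d = d * b) :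
    a * (d * (b * (c * (b * (a * (d * b)))))) =
      b * (a * (d * (b * (c * (b * (a * d)))))) := by
  have hab' : ∀ x : G, b * (a * (b * x)) = a * (b * (a * x)) := by
    intro x
    calc b * (a * (b * x)) = (b * a * b) * x := by group
      _ = (a * b * a) * x := by rw [← hab]
      _ = a * (b * (a * x)) := by group
  have hac' : ∀ x : G, c * (a * x) = a * (c * x) := by
    intro x
    calc c * (a * x) = (c * a) * x := by group
      _ = (a * c) * x := by rw [← hac]
      _ = a * (c * x) := by group
  have had' : ∀ x : G, d * (a * x) = a * (d * x) := by
    intro x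
    calc d * (a * x) = (d * a) * x := by group
      _ = (a * d) * x := by rw [← had]
      _ = a * (d * x) := by group
  have hbd' : ∀ x : G, d * (b * x) = b * (d * x) := by
    intro x
    calc d * (b * x) = (d * b) * x := by group
      _ = (b * d) * x := by rw [← hbd]
      _ = b * (d * x) := by group
  calc a * (d * (b * (c * (b * (a * (d * b))))))
      = a * (d * (b * (c * (b * (a * (b * d)))))) := by rw [hbd]
    _ = a * (d * (b * (c * (a * (b * (a * d)))))) := by rw [hab']
    _ = a * (d * (b * (a * (c * (b * (a * d)))))) := by rw [hac']
    _ = a * (b * (d * (a * (c * (b * (a * d)))))) := by rw [hbd']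
    _ = a * (b * (a * (d * (c * (b * (a * d)))))) := by rw [had']
    _ = b * (a * (b * (d * (c * (b * (a * d)))))) := by rw [← hab']
    _ = b * (a * (d * (b * (c * (b * (a * d)))))) := by rw [hbd']


/-- Abstract form of statement 2: with braid `pqp = qpq` and `u,v` commuting
with `p,q` as indicated, `puqvp = qpuqv`. -/
lemma abstract_lem2 (p q u v : G)
    (hpq : p * q * p = q * p * q)
    (huq : u * q = q * u)
    (hup : u * p = p * u)
    (hvp : v * p = p * v) :
    p * (u * (q * (v * p))) = q * (p * (u * (q * v))) := by
  have huq' : ∀ x : G, u * (q * x) = q * (u * x) := by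
    intro x
    calc u * (q * x) = (u * q) * x := by group
      _ = (q * u) * x := by rw [huq]
      _ = q * (u * x) := by group
  have hup' : ∀ x : G, u * (p * x) = p * (u * x) := by
    intro x
    calc u * (p * x) = (u * p) * x := by group
      _ = (p * u) * x := by rw [hup]
      _ = p * (u * x) := by group
  have hpq' : ∀ x : G, p * (q * (p * x)) = q * (p * (q * x)) := by
    intro x
    calc p * (q * (p * x)) = (p * q * p) * x := by group
      _ = (q * p * q) * x := by rw [hpq]
      _ = q * (p * (q * x)) := by group
  calc p * (u * (q * (v * p)))
      = p * (q * (u * (v * p))) := by rw [huq']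
    _ = p * (q * (u * (p * v))) := by rw [hvp]
    _ = p * (q * (p * (u * v))) := by rw [hup']
    _ = q * (p * (q * (u * v))) := by rw [hpq']
    _ = q * (p * (u * (q * v))) := by rw [← huq']

end AbstractLemmas

lemma rgen_pair (r i : ℕ) (h0 : i ≠ 0) (hi : i < r) :
    rgen r i = sgen r i * sgen r (2 * r + 1 - i) := by
  unfold rgen rword
  rw [if_neg h0, if_pos hi, (affCS r).wordProd_cons, (affCS r).wordProd_cons,
    (affCS r).wordProd_nil, mul_one]
  rfl

lemma rgen_top (r : ℕ) (hr : 0 < r) :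
    rgen r r = sgen r r * (sgen r (r + 1) * sgen r r) := by
  unfold rgen rword
  rw [if_neg (by omega), if_neg (lt_irrefl r), (affCS r).wordProd_cons,
    (affCS r).wordProd_cons, (affCS r).wordProd_cons, (affCS r).wordProd_nil, mul_one]
  rfl


/-- For `r ≥ 2`, the element `r_{r-1} r_r r_{r-1}` of `W` commutes with
`s_r`; moreover, if `r ≥ 3`, then for every `2 ≤ a ≤ r-1` one has
`(r_a r_{a-1}) s_a (r_a r_{a-1})⁻¹ = s_{a-1}` in `W`. -/
theorem statement12 (r : ℕ) (hr : 2 ≤ r) :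
    rgen r (r - 1) * rgen r r * rgen r (r - 1) * sgen r r =
        sgen r r * (rgen r (r - 1) * rgen r r * rgen r (r - 1)) ∧
      (3 ≤ r → ∀ a, 2 ≤ a → a ≤ r - 1 →
        rgen r a * rgen r (a - 1) * sgen r a * (rgen r a * rgen r (a - 1))⁻¹
          = sgen r (a - 1)) := by
  constructor
  · -- part 1
    have e1 : rgen r (r - 1) = sgen r (r - 1) * sgen r (r + 2) := by
      rw [rgen_pair r (r - 1) (by omega) (by omega), show 2 * r + 1 - (r - 1) = r + 2 by omega]
    have e2 : rgen r r = sgen r r * (sgen r (r + 1) * sgen r r) := rgen_top r (by omega)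
    have m0 : (r - 1) % (2 * r + 1) = r - 1 := Nat.mod_eq_of_lt (by omega)
    have m1 : r % (2 * r + 1) = r := Nat.mod_eq_of_lt (by omega)
    have m2 : (r + 1) % (2 * r + 1) = r + 1 := Nat.mod_eq_of_lt (by omega)
    have m3 : (r + 2) % (2 * r + 1) = r + 2 := Nat.mod_eq_of_lt (by omega)
    have m4 : (r - 1 + 1) % (2 * r + 1) = r := by rw [show r - 1 + 1 = r by omega]; exact m1
    have m5 : (r + 1 + 1) % (2 * r + 1) = r + 2 := m3
    have m6 : (r + 2 + 1) % (2 * r + 1) = if r = 2 then 0 else r + 3 := by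
      rw [show r + 2 + 1 = r + 3 by omega]
      split_ifs with h
      · rw [h]
      · exact Nat.mod_eq_of_lt (by omega)
    have hab : sgen r (r - 1) * sgen r r * sgen r (r - 1)
        = sgen r r * sgen r (r - 1) * sgen r r := by
      apply sgen_braid
      · rw [m0, m1]; omega
      · right; rw [m1, m4]
    have hac : sgen r (r - 1) * sgen r (r + 1) = sgen r (r + 1) * sgen r (r - 1) := by
      apply sgen_comm
      · rw [m0, m2]; omega
      · rw [m0, m5]; omega
      · rw [m2, m4]; omega
    have had : sgen r (r - 1) * sgen r (r + 2) = sgen r (r + 2) * sgen r (r - 1) := by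
      apply sgen_comm
      · rw [m0, m3]; omega
      · rw [m0, m6]; split_ifs <;> omega
      · rw [m3, m4]; omega
    have hbd : sgen r r * sgen r (r + 2) = sgen r (r + 2) * sgen r r := by
      apply sgen_comm
      · rw [m1, m3]; omega
      · rw [m1, m6]; split_ifs <;> omega
      · rw [m3, m2]; omega
    rw [e1, e2]
    simp only [mul_assoc]
    exact abstract_lem1 (sgen r (r - 1)) (sgen r r) (sgen r (r + 1)) (sgen r (r + 2))
      hab hac had hbd
  · -- part 2
    intro hr3 a ha ha'
    have e1 : rgen r a = sgen r a * sgen r (2 * r + 1 - a) :=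
      rgen_pair r a (by omega) (by omega)
    have e2 : rgen r (a - 1) = sgen r (a - 1) * sgen r (2 * r + 2 - a) := by
      rw [rgen_pair r (a - 1) (by omega) (by omega),
        show 2 * r + 1 - (a - 1) = 2 * r + 2 - a by omega]
    have n1 : a % (2 * r + 1) = a := Nat.mod_eq_of_lt (by omega)
    have n2 : (a - 1) % (2 * r + 1) = a - 1 := Nat.mod_eq_of_lt (by omega)
    have n3 : (2 * r + 1 - a) % (2 * r + 1) = 2 * r + 1 - a := Nat.mod_eq_of_lt (by omega)
    have n4 : (2 * r + 2 - a) % (2 * r + 1) = 2 * r + 2 - a := Nat.mod_eq_of_lt (by omega)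
    have n5 : (a - 1 + 1) % (2 * r + 1) = a := by rw [show a - 1 + 1 = a by omega]; exact n1
    have n6 : (a + 1) % (2 * r + 1) = a + 1 := Nat.mod_eq_of_lt (by omega)
    have n7 : (2 * r + 1 - a + 1) % (2 * r + 1) = 2 * r + 2 - a := by
      rw [show 2 * r + 1 - a + 1 = 2 * r + 2 - a by omega]; exact n4
    have n8 : (2 * r + 2 - a + 1) % (2 * r + 1) = if a = 2 then 0 else 2 * r + 3 - a := by
      rw [show 2 * r + 2 - a + 1 = 2 * r + 3 - a by omega]
      split_ifs with h
      · rw [h, show 2 * r + 3 - 2 = 2 * r + 1 by omega, Nat.mod_self]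
      · exact Nat.mod_eq_of_lt (by omega)
    have hpq : sgen r a * sgen r (a - 1) * sgen r a
        = sgen r (a - 1) * sgen r a * sgen r (a - 1) := by
      apply sgen_braid
      · rw [n1, n2]; omega
      · left; rw [n1, n5]
    have huq : sgen r (2 * r + 1 - a) * sgen r (a - 1)
        = sgen r (a - 1) * sgen r (2 * r + 1 - a) := by
      apply sgen_comm
      · rw [n3, n2]; omega
      · rw [n3, n5]; omega
      · rw [n2, n7]; omega
    have hup : sgen r (2 * r + 1 - a) * sgen r a = sgen r a * sgen r (2 * r + 1 - a) := by
      apply sgen_comm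
      · rw [n3, n1]; omega
      · rw [n3, n6]; omega
      · rw [n1, n7]; omega
    have hvp : sgen r (2 * r + 2 - a) * sgen r a = sgen r a * sgen r (2 * r + 2 - a) := by
      apply sgen_comm
      · rw [n4, n1]; omega
      · rw [n4, n6]; omega
      · rw [n1, n8]; split_ifs <;> omega
    rw [e1, e2, mul_inv_eq_iff_eq_mul]
    simp only [mul_assoc]
    exact abstract_lem2 (sgen r a) (sgen r (a - 1)) (sgen r (2 * r + 1 - a))
      (sgen r (2 * r + 2 - a)) hpq huq hup hvp
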